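/- Let G = (F ∪ C, E) be a finite bipartite graph with no isolated vertices and F nonempty. With the random selection procedure where each facility i is chosen with probability 1/(deg_F(i)+1), the expected number of edges removed in one iteration is at least sqrt(|E|). -/

import Mathlib

open MeasureTheory ProbabilityTheory Finset
open scoped Classical ENNReal

/-- `i'` is a neighbor of `i` in the facility graph `G_F`. -/
def facNbr {F C : Type*} (A : F → C → Prop) (i i' : F) : Prop :=
  i' ≠ i ∧ ∃ j, A i j ∧ A i' j

/-- Degree of facility `i` in the facility graph `G_F`. -/
noncomputable def degGF {F C : Type*} [Fintype F] (A : F → C → Prop) (i : F) : ℕ :=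
  (Finset.univ.filter (fun i' => facNbr A i i')).card

/-- Degree of facility `i` in the bipartite graph `G`. -/
noncomputable def degFac {F C : Type*} [Fintype C] (A : F → C → Prop) (i : F) : ℕ :=
  (Finset.univ.filter (fun j => A i j)).card

/-- Degree of client `j` in the bipartite graph `G`. -/
noncomputable def degCl {F C : Type*} [Fintype F] (A : F → C → Prop) (j : C) : ℕ :=
  (Finset.univ.filter (fun i => A i j)).card

/-- Facility `i` is selected in outcome `ω` iff its random value strictly exceeds
those of all its `G_F`-neighbors. -/
def selected {F C Ω : Type*} (A : F → C → Prop) (r : F → Ω → ℝ) (i : F) (ω : Ω) : Prop :=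
  ∀ i', facNbr A i i' → r i' ω < r i ω

lemma prob_selected {F C Ω : Type*} [Fintype F] [Fintype C]
    [MeasurableSpace Ω] (μ : Measure Ω) [IsProbabilityMeasure μ]
    (A : F → C → Prop) (r : F → Ω → ℝ)
    (hmeas : ∀ i, Measurable (r i))
    (hindep : iIndepFun r μ)
    (hunif : ∀ i, μ.map (r i) = volume.restrict (Set.Icc (0 : ℝ) 1))
    (i : F) :
    μ {ω | selected A r i ω} = ENNReal.ofReal (1 / (degGF A i + 1)) := by
  classical
  set N : Finset F := Finset.univ.filter (fun i' => facNbr A i i') with hN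
  have hiN : i ∉ N := by intro h; exact (Finset.mem_filter.mp h).2.1 rfl
  set n : ℕ := N.card with hn
  -- Y : the tuple of neighbors' values
  set Y : Ω → (N → ℝ) := fun ω i' => r i' ω with hY
  have hYmeas : Measurable Y := measurable_pi_lambda _ fun i' => hmeas i'
  have hXY : IndepFun (r i) Y μ := by
    have h := hindep.indepFun_finset {i} N (by simpa using hiN) hmeas
    have : r i = (fun f : ({i} : Finset F) → ℝ => f ⟨i, by simp⟩) ∘
        (fun ω (k : ({i} : Finset F)) => r k ω) := by
      funext ω; rfl
    rw [this]
    exact h.comp (measurable_pi_apply _) measurable_id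
  -- the event
  set s : Set (ℝ × (N → ℝ)) := {p | ∀ i' : N, p.2 i' < p.1} with hs
  have hsm : MeasurableSet s := by
    have : s = ⋂ i' : N, {p : ℝ × (N → ℝ) | p.2 i' < p.1} := by
      ext p; simp [hs]
    rw [this]
    exact MeasurableSet.iInter fun i' =>
      measurableSet_lt (measurable_snd.eval) measurable_fst
  have hev : {ω | selected A r i ω} = (fun ω => (r i ω, Y ω)) ⁻¹' s := by
    ext ω
    simp only [Set.mem_setOf_eq, Set.mem_preimage, hs, selected, hY]
    constructor
    · rintro h ⟨i', hi'⟩; exact h i' (by simpa [hN] using hi')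
    · intro h i' hi'; exact h ⟨i', by simp [hN, hi']⟩
  set ν : Measure ℝ := volume.restrict (Set.Icc (0:ℝ) 1) with hν
  set η : Measure (N → ℝ) := μ.map Y with hη
  haveI : IsProbabilityMeasure η := Measure.isProbabilityMeasure_map hYmeas.aemeasurable
  have hmap : μ.map (fun ω => (r i ω, Y ω)) = (μ.map (r i)).prod η :=
    (indepFun_iff_map_prod_eq_prod_map_map (hmeas i).aemeasurable hYmeas.aemeasurable).mp hXY
  have h1 : μ {ω | selected A r i ω} = (ν.prod η) s := by
    rw [hev, ← Measure.map_apply ((hmeas i).prodMk hYmeas) hsm, hmap, hunif i]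
  have hslice : ∀ t : ℝ, η (Prod.mk t ⁻¹' s) = (ν (Set.Iio t))^n := by
    intro t
    have hpre : Prod.mk t ⁻¹' s = {y : N → ℝ | ∀ i' : N, y i' < t} := by
      ext y; simp [hs]
    have hm2 : MeasurableSet {y : N → ℝ | ∀ i' : N, y i' < t} := by
      have : {y : N → ℝ | ∀ i' : N, y i' < t} = ⋂ i' : N, {y : N → ℝ | y i' < t} := by
        ext y; simp
      rw [this]
      exact MeasurableSet.iInter fun i' =>
        measurableSet_lt (measurable_pi_apply i') measurable_const
    have hYpre : Y ⁻¹' {y : N → ℝ | ∀ i' : N, y i' < t}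
        = ⋂ i' ∈ N, r i' ⁻¹' Set.Iio t := by
      ext ω; simp [hY]
    have huni : ∀ i' : F, μ (r i' ⁻¹' Set.Iio t) = ν (Set.Iio t) := fun i' => by
      rw [← Measure.map_apply (hmeas i') measurableSet_Iio, hunif i']
    rw [hpre, hη, Measure.map_apply hYmeas hm2, hYpre,
      hindep.measure_inter_preimage_eq_mul N (sets := fun _ => Set.Iio t)
        (fun _ _ => measurableSet_Iio)]
    simp only [huni]
    rw [Finset.prod_const, hn]
  have h2 : (ν.prod η) s = ∫⁻ t, (ν (Set.Iio t))^n ∂ν := by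
    rw [Measure.prod_apply hsm]
    simp only [hslice]
  have h3 : ∫⁻ t, (ν (Set.Iio t))^n ∂ν
      = ∫⁻ t in Set.Icc (0:ℝ) 1, ENNReal.ofReal (t^n) ∂volume := by
    rw [hν]
    refine setLIntegral_congr_fun measurableSet_Icc ?_
    intro t ht
    have : Set.Iio t ∩ Set.Icc (0:ℝ) 1 = Set.Ico 0 t := by
      ext x
      exact ⟨fun ⟨h1, h2, _⟩ => ⟨h2, h1⟩,
        fun ⟨h1, h2⟩ => ⟨h2, h1, le_trans (le_of_lt h2) ht.2⟩⟩
    beta_reduce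
    rw [Measure.restrict_apply measurableSet_Iio, this, Real.volume_Ico, sub_zero,
      ← ENNReal.ofReal_pow ht.1]
  have h4 : ∫⁻ t in Set.Icc (0:ℝ) 1, ENNReal.ofReal (t^n) ∂volume
      = ENNReal.ofReal (1 / (n + 1)) := by
    have hint : IntegrableOn (fun t : ℝ => t^n) (Set.Icc 0 1) volume :=
      (continuous_pow n).integrableOn_Icc
    have hnn : 0 ≤ᵐ[volume.restrict (Set.Icc (0:ℝ) 1)] fun t : ℝ => t^n := by
      refine (ae_restrict_iff' measurableSet_Icc).2 (Filter.Eventually.of_forall ?_)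
      exact fun t ht => pow_nonneg ht.1 n
    rw [← ofReal_integral_eq_lintegral_ofReal hint hnn]
    congr 1
    rw [integral_Icc_eq_integral_Ioc, ← intervalIntegral.integral_of_le zero_le_one,
      integral_pow]
    simp
  rw [h1, h2, h3, h4]
  rfl

/-- For a bipartite graph with no isolated vertices, the expected number of edges
removed in one iteration of the random selection procedure is at least
`sqrt(|E|)`. -/
theorem expected_removed_edges_ge_sqrt {F C Ω : Type*} [Fintype F] [Fintype C] [Nonempty F]
    [MeasurableSpace Ω] (μ : Measure Ω) [IsProbabilityMeasure μ]
    (A : F → C → Prop)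
    (hF : ∀ i : F, ∃ j, A i j) (hC : ∀ j : C, ∃ i, A i j)
    (r : F → Ω → ℝ)
    (hmeas : ∀ i, Measurable (r i))
    (hindep : iIndepFun r μ)
    (hunif : ∀ i, μ.map (r i) = volume.restrict (Set.Icc (0 : ℝ) 1))
    (hdistinct : ∀ i i' : F, i ≠ i' → μ {ω | r i ω = r i' ω} = 0) :
    Real.sqrt (∑ i : F, (degFac A i : ℝ))
      ≤ ∫ ω, (∑ i : F, if selected A r i ω then
          (∑ j ∈ Finset.univ.filter (fun j => A i j), (degCl A j : ℝ)) else 0) ∂μ := by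
  classical
  set c : F → ℝ := fun i => ∑ j ∈ Finset.univ.filter (fun j => A i j), (degCl A j : ℝ)
    with hc
  have hc0 : ∀ i, 0 ≤ c i := fun i =>
    Finset.sum_nonneg fun j _ => Nat.cast_nonneg _
  have hsel_m : ∀ i, MeasurableSet {ω | selected A r i ω} := by
    intro i
    have : {ω | selected A r i ω}
        = ⋂ i' ∈ Finset.univ.filter (fun i' => facNbr A i i'), {ω | r i' ω < r i ω} := by
      ext ω; simp [selected]
    rw [this]
    exact Finset.measurableSet_biInter _ fun i' _ => measurableSet_lt (hmeas i') (hmeas i)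
  -- compute the integral
  have hint : ∀ i : F, Integrable
      (fun ω => if selected A r i ω then c i else 0) μ := by
    intro i
    have : (fun ω => if selected A r i ω then c i else 0)
        = Set.indicator {ω | selected A r i ω} (fun _ => c i) := by
      funext ω; simp [Set.indicator_apply]
    rw [this]
    exact (integrable_const (c i)).indicator (hsel_m i)
  have hI : (∫ ω, (∑ i : F, if selected A r i ω then c i else 0) ∂μ)
      = ∑ i : F, (1 / ((degGF A i : ℝ) + 1)) * c i := by
    rw [integral_finset_sum _ fun i _ => hint i]
    refine Finset.sum_congr rfl fun i _ => ?_
    have : (fun ω => if selected A r i ω then c i else 0)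
        = Set.indicator {ω | selected A r i ω} (fun _ => c i) := by
      funext ω; simp [Set.indicator_apply]
    rw [this, integral_indicator_const _ (hsel_m i), measureReal_def,
      prob_selected μ A r hmeas hindep hunif i, ENNReal.toReal_ofReal (by positivity),
      smul_eq_mul]
  rw [hI]
  -- combinatorial bounds
  have hca : ∀ i, (degGF A i : ℝ) + 1 ≤ c i := by
    intro i
    have hnat : degGF A i + 1 ≤ ∑ j ∈ Finset.univ.filter (fun j => A i j), degCl A j := by
      set N := Finset.univ.filter (fun i' => facNbr A i i') with hN
      have hiN : i ∉ N := by intro h; exact (Finset.mem_filter.mp h).2.1 rfl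
      have hsub : insert i N ⊆
          (Finset.univ.filter (fun j => A i j)).biUnion
            (fun j => Finset.univ.filter (fun i' => A i' j)) := by
        intro i' hi'
        rcases Finset.mem_insert.mp hi' with h | h
        · subst h
          obtain ⟨j, hj⟩ := hF i'
          exact Finset.mem_biUnion.mpr ⟨j, by simp [hj], by simp [hj]⟩
        · obtain ⟨_, j, hj1, hj2⟩ := (Finset.mem_filter.mp h).2
          exact Finset.mem_biUnion.mpr ⟨j, by simp [hj1], by simp [hj2]⟩
      calc degGF A i + 1 = (insert i N).card := by
            rw [Finset.card_insert_of_notMem hiN, degGF]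
        _ ≤ _ := (Finset.card_le_card hsub).trans (Finset.card_biUnion_le)
    calc ((degGF A i : ℝ) + 1)
        = ((degGF A i + 1 : ℕ) : ℝ) := by push_cast; ring
      _ ≤ ((∑ j ∈ Finset.univ.filter (fun j => A i j), degCl A j : ℕ) : ℝ) := by
          exact_mod_cast hnat
      _ = c i := by rw [hc]; push_cast; rfl
  have hcb : ∀ i, (degFac A i : ℝ) ≤ c i := by
    intro i
    have hnat : degFac A i ≤ ∑ j ∈ Finset.univ.filter (fun j => A i j), degCl A j := by
      rw [degFac, Finset.card_eq_sum_ones (Finset.univ.filter (fun j => A i j))]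
      refine Finset.sum_le_sum fun j hj => ?_
      have : i ∈ Finset.univ.filter (fun i' => A i' j) := by
        simp [Finset.mem_filter.mp hj]
      exact Finset.card_pos.mpr ⟨i, this⟩
    calc (degFac A i : ℝ)
        ≤ ((∑ j ∈ Finset.univ.filter (fun j => A i j), degCl A j : ℕ) : ℝ) := by
          exact_mod_cast hnat
      _ = c i := by rw [hc]; push_cast; rfl
  have hnm : ∀ i, (degGF A i : ℝ) + 1 ≤ (Fintype.card F : ℝ) := by
    intro i
    have : degGF A i + 1 ≤ Fintype.card F := by
      have hiN : i ∉ Finset.univ.filter (fun i' => facNbr A i i') := by intro h; exact (Finset.mem_filter.mp h).2.1 rfl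
      rw [degGF, ← Finset.card_insert_of_notMem hiN]
      exact (Finset.card_le_card (Finset.subset_univ _)).trans_eq (Finset.card_univ)
    exact_mod_cast this
  -- arithmetic
  set m : ℝ := (Fintype.card F : ℝ) with hm
  have hm0 : (0:ℝ) < m := by
    rw [hm]; exact_mod_cast Fintype.card_pos
  set S : ℝ := ∑ i : F, (1 / ((degGF A i : ℝ) + 1)) * c i with hS
  have hd0 : ∀ i, (0:ℝ) < (degGF A i : ℝ) + 1 := fun i => by positivity
  have h_m_le : m ≤ S := by
    have hms : m = ∑ _i : F, (1:ℝ) := by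
      rw [Finset.sum_const, Finset.card_univ, hm]; simp
    rw [hS, hms]
    refine Finset.sum_le_sum fun i _ => ?_
    rw [one_div_mul_eq_div, le_div_iff₀ (hd0 i), one_mul]
    exact hca i
  have hE0 : (0:ℝ) ≤ ∑ i : F, (degFac A i : ℝ) :=
    Finset.sum_nonneg fun i _ => Nat.cast_nonneg _
  have h_E_le : (∑ i : F, (degFac A i : ℝ)) / m ≤ S := by
    rw [hS, Finset.sum_div]
    refine Finset.sum_le_sum fun i _ => ?_
    rw [one_div_mul_eq_div]
    exact div_le_div₀ (hc0 i) (hcb i) (hd0 i) (hnm i)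
  have hS0 : 0 ≤ S := hm0.le.trans h_m_le
  calc Real.sqrt (∑ i : F, (degFac A i : ℝ))
      = Real.sqrt (m * ((∑ i : F, (degFac A i : ℝ)) / m)) := by
        rw [mul_div_cancel₀ _ hm0.ne']
    _ ≤ Real.sqrt (S * S) := Real.sqrt_le_sqrt
        (mul_le_mul h_m_le h_E_le (div_nonneg hE0 hm0.le) hS0)
    _ = S := Real.sqrt_mul_self hS0
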